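/- arXiv:2506.11871 — 2 statements merged into one kernel-verified Lean document; each statement's English description precedes it below -/
import Mathlib

section
/- Let $h, V, W$ be $M \times M$ complex matrices with $V$ invertible, $\omega \in \mathbb{C}$, and let $T$ be the associated transfer matrix. Suppose a sequence of $M \times M$ matrices $(X_n)_{n \geq 0}$ satisfies $X_0 = 0$ and the Dyson recursion $V^{-1}(\omega - h) X_n - V^{-1} W X_{n-1} X_n = I$ for $n \geq 1$. Then for all $L \geq 1$: $\begin{pmatrix} I \\ X_L \end{pmatrix} = T^L \begin{pmatrix} I \\ 0 \end{pmatrix} X_1 X_2 \cdots X_L$. In particular, if $[T^L]_{11}$ is invertible, then $X_L = [T^L]_{21} [T^L]_{11}^{-1}$. -/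
open Matrix

/-- Stack two `M × M` matrices vertically into a `2M × M` matrix. -/
def stack {M : ℕ} (A B : Matrix (Fin M) (Fin M) ℂ) :
    Matrix (Fin M ⊕ Fin M) (Fin M) ℂ :=
  Matrix.of fun i j => Sum.elim (fun r => A r j) (fun r => B r j) i

lemma fromBlocks_mul_stack {M : ℕ} (A B C D P Q : Matrix (Fin M) (Fin M) ℂ) :
    Matrix.fromBlocks A B C D * stack P Q = stack (A * P + B * Q) (C * P + D * Q) := by
  ext i j
  cases i <;>
    simp [stack, Matrix.fromBlocks, Matrix.mul_apply, Fintype.sum_sum_type, Matrix.add_apply]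

lemma stack_mul {M : ℕ} (A B P : Matrix (Fin M) (Fin M) ℂ) :
    stack A B * P = stack (A * P) (B * P) := by
  ext i j
  cases i <;> simp [stack, Matrix.mul_apply]

lemma stack_inj {M : ℕ} {A B C D : Matrix (Fin M) (Fin M) ℂ}
    (hs : stack A B = stack C D) : A = C ∧ B = D := by
  constructor <;> ext i j
  · exact congrFun (congrFun hs (Sum.inl i)) j
  · exact congrFun (congrFun hs (Sum.inr i)) j

theorem stmt_7 (M : ℕ) (h V W : Matrix (Fin M) (Fin M) ℂ) [Invertible V] (ω : ℂ)
    (T : Matrix (Fin M ⊕ Fin M) (Fin M ⊕ Fin M) ℂ)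
    (hT : T = Matrix.fromBlocks (V⁻¹ * (ω • (1 : Matrix (Fin M) (Fin M) ℂ) - h))
      (-(V⁻¹ * W)) 1 0)
    (X : ℕ → Matrix (Fin M) (Fin M) ℂ) (hX0 : X 0 = 0)
    (hrec : ∀ n : ℕ, 1 ≤ n →
      V⁻¹ * (ω • (1 : Matrix (Fin M) (Fin M) ℂ) - h) * X n
        - V⁻¹ * W * X (n - 1) * X n = 1) :
    (∀ L : ℕ, 1 ≤ L →
      stack 1 (X L) =
        (T ^ L * stack 1 0 : Matrix (Fin M ⊕ Fin M) (Fin M) ℂ) * ((List.range L).map (fun i => X (i + 1))).prod) ∧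
    (∀ L : ℕ, 1 ≤ L → IsUnit ((T ^ L).toBlocks₁₁) →
      X L = (T ^ L).toBlocks₂₁ * ((T ^ L).toBlocks₁₁)⁻¹) := by
  have key : ∀ n : ℕ, 1 ≤ n → T * stack 1 (X (n - 1)) * X n = stack 1 (X n) := by
    intro n hn
    rw [hT, fromBlocks_mul_stack, stack_mul]
    have e1 : (V⁻¹ * (ω • (1 : Matrix (Fin M) (Fin M) ℂ) - h) * 1
        + -(V⁻¹ * W) * X (n - 1)) * X n = 1 := by
      rw [Matrix.mul_one, add_mul, neg_mul, neg_mul, ← sub_eq_add_neg]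
      exact hrec n hn
    have e2 : ((1 : Matrix (Fin M) (Fin M) ℂ) * 1 + 0 * X (n - 1)) * X n = X n := by simp
    rw [e1, e2]
  have main : ∀ L : ℕ, 1 ≤ L →
      stack 1 (X L) =
        (T ^ L * stack 1 0 : Matrix (Fin M ⊕ Fin M) (Fin M) ℂ) * ((List.range L).map (fun i => X (i + 1))).prod := by
    intro L hL
    change stack 1 (X L) = @HMul.hMul _ _ (Matrix (Fin M ⊕ Fin M) (Fin M) ℂ) Matrix.instHMulOfFintypeOfMulOfAddCommMonoid (T ^ L) (stack 1 0) * ((List.range L).map (fun i => X (i + 1))).prod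
    induction L with
    | zero => omega
    | succ n ih =>
      rcases Nat.eq_or_lt_of_le hL with h0 | h0
      · -- n = 0
        have hn : n = 0 := by omega
        subst hn
        have := key 1 le_rfl
        simp only [Nat.sub_self, hX0] at this
        simpa [pow_one, List.range_succ] using this.symm
      · have hn : 1 ≤ n := by omega
        have ihn := ih hn
        have hk := key (n + 1) (by omega)
        simp only [Nat.add_sub_cancel] at hk
        rw [← hk, ihn]
        rw [List.range_succ, List.map_append, List.prod_append]
        simp only [List.map_cons, List.map_nil, List.prod_cons, List.prod_nil,
          Matrix.mul_one, pow_succ']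
        simp only [Matrix.mul_assoc]
  refine ⟨main, ?_⟩
  intro L hL hu
  have hm := main L hL
  change stack 1 (X L) = @HMul.hMul _ _ (Matrix (Fin M ⊕ Fin M) (Fin M) ℂ) Matrix.instHMulOfFintypeOfMulOfAddCommMonoid (T ^ L) (stack 1 0) * ((List.range L).map (fun i => X (i + 1))).prod at hm
  have hTL : T ^ L = Matrix.fromBlocks (T ^ L).toBlocks₁₁ (T ^ L).toBlocks₁₂
      (T ^ L).toBlocks₂₁ (T ^ L).toBlocks₂₂ := (Matrix.fromBlocks_toBlocks _).symm
  set P := ((List.range L).map (fun i => X (i + 1))).prod with hP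
  rw [hTL, fromBlocks_mul_stack, stack_mul] at hm
  simp only [Matrix.mul_one, Matrix.mul_zero, add_zero] at hm
  obtain ⟨h1, h2⟩ := stack_inj hm
  have hPinv : ((T ^ L).toBlocks₁₁)⁻¹ = P := Matrix.inv_eq_right_inv h1.symm
  rw [hPinv, h2]
end

section
/- Let $T$ be an invertible $2M \times 2M$ complex matrix diagonalized as $U^{-1} T U = \mathrm{diag}(B_1, B_2)$ where $B_1, B_2$ are $M \times M$ diagonal with diagonal entries of $B_1$ all strictly larger in absolute value than all diagonal entries of $B_2$. Write $U = \begin{pmatrix} U_{11} & U_{12} \\ U_{21} & U_{22} \end{pmatrix}$ in $M \times M$ blocks, and assume $U_{11}$ and $[(U^{-1})]_{11}$ are invertible. Then $B_2^L (U^{-1})_{21} (U^{-1})_{11}^{-1} B_1^{-L} \to 0$ as $L \to \infty$, and consequently $[T^L]_{21}\, ([T^L]_{11})^{-1} \to U_{21} U_{11}^{-1}$ as $L \to \infty$. -/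
open Matrix Filter Topology

private lemma contAt_inv {n : Type*} [Fintype n] [DecidableEq n]
    {A : Matrix n n ℂ} (hA : IsUnit A) :
    ContinuousAt (fun X : Matrix n n ℂ => X⁻¹) A := by
  have hdet : A.det ≠ 0 := ((Matrix.isUnit_iff_isUnit_det A).mp hA).ne_zero
  have heq : (fun X : Matrix n n ℂ => X⁻¹)
      = fun X : Matrix n n ℂ => (X.det)⁻¹ • X.adjugate := by
    funext X; rw [Matrix.inv_def, Ring.inverse_eq_inv']
  rw [heq]
  exact ((continuous_id.matrix_det.continuousAt).inv₀ hdet).smul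
    (continuous_id.matrix_adjugate).continuousAt

private lemma toBlocks21_mul3 {m : Type*} [Fintype m] [DecidableEq m]
    (X Y : Matrix (m ⊕ m) (m ⊕ m) ℂ) (A B : Matrix m m ℂ) :
    (X * Matrix.fromBlocks A 0 0 B * Y).toBlocks₂₁
      = X.toBlocks₂₁ * (A * Y.toBlocks₁₁) + X.toBlocks₂₂ * (B * Y.toBlocks₂₁) := by
  conv_lhs => rw [← Matrix.fromBlocks_toBlocks X, ← Matrix.fromBlocks_toBlocks Y]
  rw [Matrix.fromBlocks_multiply, Matrix.fromBlocks_multiply,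
    Matrix.toBlocks_fromBlocks₂₁]
  simp [Matrix.add_mul, Matrix.mul_assoc]

private lemma toBlocks11_mul3 {m : Type*} [Fintype m] [DecidableEq m]
    (X Y : Matrix (m ⊕ m) (m ⊕ m) ℂ) (A B : Matrix m m ℂ) :
    (X * Matrix.fromBlocks A 0 0 B * Y).toBlocks₁₁
      = X.toBlocks₁₁ * (A * Y.toBlocks₁₁) + X.toBlocks₁₂ * (B * Y.toBlocks₂₁) := by
  conv_lhs => rw [← Matrix.fromBlocks_toBlocks X, ← Matrix.fromBlocks_toBlocks Y]
  rw [Matrix.fromBlocks_multiply, Matrix.fromBlocks_multiply,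
    Matrix.toBlocks_fromBlocks₁₁]
  simp [Matrix.add_mul, Matrix.mul_assoc]

theorem stmt_17 (M : ℕ) (T U : Matrix (Fin M ⊕ Fin M) (Fin M ⊕ Fin M) ℂ)
    (hT : IsUnit T) (hU : IsUnit U)
    (b1 b2 : Fin M → ℂ)
    (hdiag : U⁻¹ * T * U =
      Matrix.fromBlocks (Matrix.diagonal b1) 0 0 (Matrix.diagonal b2))
    (habs : ∀ i j : Fin M, ‖b2 j‖ < ‖b1 i‖)
    (hU11 : IsUnit U.toBlocks₁₁) (hUinv11 : IsUnit (U⁻¹).toBlocks₁₁) :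
    Tendsto (fun L : ℕ =>
        (Matrix.diagonal b2) ^ L * (U⁻¹).toBlocks₂₁ * ((U⁻¹).toBlocks₁₁)⁻¹ *
          ((Matrix.diagonal b1)⁻¹) ^ L) atTop (𝓝 0) ∧
    Tendsto (fun L : ℕ => (T ^ L).toBlocks₂₁ * ((T ^ L).toBlocks₁₁)⁻¹) atTop
      (𝓝 (U.toBlocks₂₁ * (U.toBlocks₁₁)⁻¹)) := by
  have hUdet : IsUnit U.det := (Matrix.isUnit_iff_isUnit_det U).mp hU
  have hb1 : ∀ i, b1 i ≠ 0 := by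
    intro i h
    have h1 := habs i i
    rw [h, norm_zero] at h1
    exact absurd h1 (not_lt.mpr (norm_nonneg _))
  have hAinv : (Matrix.diagonal b1)⁻¹ = Matrix.diagonal (fun i => (b1 i)⁻¹) := by
    refine Matrix.inv_eq_right_inv ?_
    rw [Matrix.diagonal_mul_diagonal]
    have h2 : (fun i => b1 i * (b1 i)⁻¹) = fun _ => (1 : ℂ) :=
      funext fun i => mul_inv_cancel₀ (hb1 i)
    rw [h2, Matrix.diagonal_one]
  have hV11det : IsUnit ((U⁻¹).toBlocks₁₁).det :=
    (Matrix.isUnit_iff_isUnit_det _).mp hUinv11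
  have hU11det : IsUnit (U.toBlocks₁₁).det :=
    (Matrix.isUnit_iff_isUnit_det _).mp hU11
  -- the sequence E
  set E : ℕ → Matrix (Fin M) (Fin M) ℂ := fun L =>
    (Matrix.diagonal b2) ^ L * (U⁻¹).toBlocks₂₁ * ((U⁻¹).toBlocks₁₁)⁻¹ *
      ((Matrix.diagonal b1)⁻¹) ^ L with hE_def
  -- Part 1
  have key1 : Tendsto E atTop (𝓝 0) := by
    set W : Matrix (Fin M) (Fin M) ℂ :=
      (U⁻¹).toBlocks₂₁ * ((U⁻¹).toBlocks₁₁)⁻¹ with hW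
    have hentry : ∀ (L : ℕ) (i j : Fin M),
        E L i j = (b2 i * (b1 j)⁻¹) ^ L * W i j := by
      intro L i j
      have h1 : E L = (Matrix.diagonal (b2 ^ L)) * W *
          (Matrix.diagonal ((fun i => (b1 i)⁻¹) ^ L)) := by
        rw [hE_def]
        simp only [hAinv, Matrix.diagonal_pow, hW, Matrix.mul_assoc]
      rw [h1, Matrix.mul_diagonal, Matrix.diagonal_mul, Pi.pow_apply, Pi.pow_apply,
        mul_pow]
      ring
    refine tendsto_pi_nhds.mpr fun i => tendsto_pi_nhds.mpr fun j => ?_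
    have hlt : ‖b2 i * (b1 j)⁻¹‖ < 1 := by
      have hpos : 0 < ‖b1 j‖ := norm_pos_iff.mpr (hb1 j)
      rw [norm_mul, norm_inv,
        ← div_eq_mul_inv]
      exact (div_lt_one hpos).mpr (habs j i)
    have hlim : Tendsto (fun L : ℕ => (b2 i * (b1 j)⁻¹) ^ L * W i j) atTop (𝓝 0) := by
      simpa using (tendsto_pow_atTop_nhds_zero_of_norm_lt_one hlt).mul_const (W i j)
    have : (fun L : ℕ => E L i j) = fun L => (b2 i * (b1 j)⁻¹) ^ L * W i j :=
      funext fun L => hentry L i j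
    rw [show ((0 : Matrix (Fin M) (Fin M) ℂ) i j) = 0 from rfl, this]
    exact hlim
  refine ⟨key1, ?_⟩
  -- Part 2
  have hVU : U⁻¹ * U = 1 := Matrix.nonsing_inv_mul U hUdet
  have hUV : U * U⁻¹ = 1 := Matrix.mul_nonsing_inv U hUdet
  have hTD : T = U * Matrix.fromBlocks (Matrix.diagonal b1) 0 0 (Matrix.diagonal b2)
      * U⁻¹ := by
    rw [← hdiag]
    calc T = (U * U⁻¹) * T * (U * U⁻¹) := by rw [hUV, Matrix.one_mul, Matrix.mul_one]
    _ = U * (U⁻¹ * T * U) * U⁻¹ := by simp only [Matrix.mul_assoc]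
  have hsL : ∀ L : ℕ,
      (Matrix.fromBlocks (Matrix.diagonal b1) 0 0 (Matrix.diagonal b2)) ^ L
        = Matrix.fromBlocks ((Matrix.diagonal b1) ^ L) 0 0 ((Matrix.diagonal b2) ^ L) := by
    intro L
    induction L with
    | zero => simp [Matrix.fromBlocks_one]
    | succ L ih =>
      rw [pow_succ, pow_succ, pow_succ, ih, Matrix.fromBlocks_multiply]
      simp
  have hTL : ∀ L : ℕ, T ^ L =
      U * Matrix.fromBlocks ((Matrix.diagonal b1) ^ L) 0 0 ((Matrix.diagonal b2) ^ L)
        * U⁻¹ := by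
    intro L
    induction L with
    | zero => simp [Matrix.fromBlocks_one, hUV]
    | succ L ih =>
      rw [pow_succ, ih, hTD]
      calc U * Matrix.fromBlocks ((Matrix.diagonal b1) ^ L) 0 0 ((Matrix.diagonal b2) ^ L) * U⁻¹ *
            (U * Matrix.fromBlocks (Matrix.diagonal b1) 0 0 (Matrix.diagonal b2) * U⁻¹)
          = U * (Matrix.fromBlocks ((Matrix.diagonal b1) ^ L) 0 0 ((Matrix.diagonal b2) ^ L) *
            ((U⁻¹ * U) * (Matrix.fromBlocks (Matrix.diagonal b1) 0 0 (Matrix.diagonal b2) * U⁻¹))) := by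
            simp only [Matrix.mul_assoc]
        _ = U * Matrix.fromBlocks ((Matrix.diagonal b1) ^ (L + 1)) 0 0 ((Matrix.diagonal b2) ^ (L + 1)) * U⁻¹ := by
            rw [hVU, Matrix.one_mul]
            have hmul : Matrix.fromBlocks ((Matrix.diagonal b1) ^ L) 0 0 ((Matrix.diagonal b2) ^ L) *
                Matrix.fromBlocks (Matrix.diagonal b1) 0 0 (Matrix.diagonal b2)
                = Matrix.fromBlocks ((Matrix.diagonal b1) ^ (L + 1)) 0 0 ((Matrix.diagonal b2) ^ (L + 1)) := by
              rw [Matrix.fromBlocks_multiply]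
              simp [pow_succ]
            rw [← Matrix.mul_assoc
              (Matrix.fromBlocks ((Matrix.diagonal b1) ^ L) 0 0 ((Matrix.diagonal b2) ^ L)),
              hmul, ← Matrix.mul_assoc]
  -- invertibility of the diagonal block and products
  have hAdet : IsUnit (Matrix.diagonal b1).det := by
    rw [Matrix.det_diagonal]
    exact isUnit_iff_ne_zero.mpr (Finset.prod_ne_zero_iff.mpr fun i _ => hb1 i)
  have hAVdet : ∀ L : ℕ, IsUnit ((Matrix.diagonal b1) ^ L * (U⁻¹).toBlocks₁₁).det := by
    intro L
    rw [Matrix.det_mul, Matrix.det_pow]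
    exact (hAdet.pow L).mul hV11det
  -- E L * (A^L * V11) = B^L * V21
  have hAinvpow : ∀ L : ℕ,
      ((Matrix.diagonal b1)⁻¹) ^ L * (Matrix.diagonal b1) ^ L = 1 := by
    intro L
    rw [hAinv, Matrix.diagonal_pow, Matrix.diagonal_pow, Matrix.diagonal_mul_diagonal]
    have h2 : (fun i => ((fun i => (b1 i)⁻¹) ^ L) i * (b1 ^ L) i) = fun _ => (1 : ℂ) := by
      funext i
      simp only [Pi.pow_apply]
      rw [← mul_pow, inv_mul_cancel₀ (hb1 i), one_pow]
    rw [h2, Matrix.diagonal_one]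
  have hEA : ∀ L : ℕ,
      E L * ((Matrix.diagonal b1) ^ L * (U⁻¹).toBlocks₁₁)
        = (Matrix.diagonal b2) ^ L * (U⁻¹).toBlocks₂₁ := by
    intro L
    rw [hE_def]
    simp only [Matrix.mul_assoc]
    rw [← Matrix.mul_assoc (((Matrix.diagonal b1)⁻¹) ^ L) ((Matrix.diagonal b1) ^ L)
      ((U⁻¹).toBlocks₁₁), hAinvpow L, Matrix.one_mul,
      Matrix.nonsing_inv_mul _ hV11det, Matrix.mul_one]
  -- block formulas for T^L
  have hT21 : ∀ L : ℕ, (T ^ L).toBlocks₂₁ =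
      (U.toBlocks₂₁ + U.toBlocks₂₂ * E L) * ((Matrix.diagonal b1) ^ L * (U⁻¹).toBlocks₁₁) := by
    intro L
    rw [hTL L, toBlocks21_mul3, Matrix.add_mul, ← hEA L,
      ← Matrix.mul_assoc U.toBlocks₂₂ (E L)]
  have hT11 : ∀ L : ℕ, (T ^ L).toBlocks₁₁ =
      (U.toBlocks₁₁ + U.toBlocks₁₂ * E L) * ((Matrix.diagonal b1) ^ L * (U⁻¹).toBlocks₁₁) := by
    intro L
    rw [hTL L, toBlocks11_mul3, Matrix.add_mul, ← hEA L,
      ← Matrix.mul_assoc U.toBlocks₁₂ (E L)]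
  -- the continuous function F
  set F : Matrix (Fin M) (Fin M) ℂ → Matrix (Fin M) (Fin M) ℂ := fun X =>
    (U.toBlocks₂₁ + U.toBlocks₂₂ * X) * (U.toBlocks₁₁ + U.toBlocks₁₂ * X)⁻¹ with hF_def
  have hF0 : F 0 = U.toBlocks₂₁ * (U.toBlocks₁₁)⁻¹ := by
    rw [hF_def]; simp
  have heqF : ∀ L : ℕ, (T ^ L).toBlocks₂₁ * ((T ^ L).toBlocks₁₁)⁻¹ = F (E L) := by
    intro L
    rw [hT21 L, hT11 L, Matrix.mul_inv_rev, ← Matrix.mul_assoc,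
      Matrix.mul_nonsing_inv_cancel_right _ _ (hAVdet L)]
  have hFcont : ContinuousAt F 0 := by
    have h2 : Continuous fun X : Matrix (Fin M) (Fin M) ℂ =>
        U.toBlocks₁₁ + U.toBlocks₁₂ * X :=
      continuous_const.add (continuous_const.matrix_mul continuous_id)
    have h3 : ContinuousAt (fun X : Matrix (Fin M) (Fin M) ℂ =>
        (U.toBlocks₁₁ + U.toBlocks₁₂ * X)⁻¹) 0 := by
      have hpt : IsUnit (U.toBlocks₁₁ + U.toBlocks₁₂ * (0 : Matrix (Fin M) (Fin M) ℂ)) := by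
        simpa using hU11
      exact ContinuousAt.comp (f := fun X : Matrix (Fin M) (Fin M) ℂ =>
        U.toBlocks₁₁ + U.toBlocks₁₂ * X) (x := 0) (contAt_inv hpt) h2.continuousAt
    have h1 : Continuous fun X : Matrix (Fin M) (Fin M) ℂ =>
        U.toBlocks₂₁ + U.toBlocks₂₂ * X :=
      continuous_const.add (continuous_const.matrix_mul continuous_id)
    exact h1.continuousAt.mul h3
  have hcomp : Tendsto (fun L => F (E L)) atTop (𝓝 (U.toBlocks₂₁ * (U.toBlocks₁₁)⁻¹)) := by
    rw [← hF0]
    exact hFcont.tendsto.comp key1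
  exact hcomp.congr fun L => (heqF L).symm
end
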